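/- arXiv:2410.06177 — 3 statements merged into one kernel-verified Lean document; each statement's English description precedes it below -/
import Mathlib

section
/- For every n ≥ 1 and every prime power q of odd characteristic, the number of lines V ∈ Gr_{1,n}(F_q) all of whose Plücker coordinates (i.e., the entries of a spanning row vector in reduced row echelon form) are squares in F_q equals the sum over i = 0 to n−1 of ((q+1)/2)^i. -/
open Finset

section SquareCount

variable (F : Type*) [Field F] [Fintype F] [DecidableEq F]

/-- In a finite field of odd characteristic, twice the number of squares is `q + 1`. -/
lemma two_mul_card_isSquare (hF : ringChar F ≠ 2) :
    2 * (univ.filter (fun a : F => IsSquare a)).card = Fintype.card F + 1 := by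
  classical
  set T : Finset F := univ.filter (fun a : F => IsSquare a) with hT
  have h0T : (0 : F) ∈ T := by
    simp only [hT, mem_filter, mem_univ, true_and]
    exact ⟨0, by ring⟩
  have hfib : (univ : Finset F).card
      = ∑ a ∈ univ, (univ.filter (fun x : F => x ^ 2 = a)).card :=
    Finset.card_eq_sum_card_fiberwise (f := fun x : F => x ^ 2) (fun x _ => mem_univ _)
  have hzero : ∀ a : F, a ∉ T → (univ.filter (fun x : F => x ^ 2 = a)).card = 0 := by
    intro a ha
    simp only [hT, mem_filter, mem_univ, true_and] at ha
    rw [Finset.card_eq_zero]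
    ext x
    simp only [mem_filter, mem_univ, true_and, Finset.notMem_empty, iff_false]
    intro hx
    exact ha ⟨x, by rw [← hx]; ring⟩
  have hsum : (univ : Finset F).card = ∑ a ∈ T, (univ.filter (fun x : F => x ^ 2 = a)).card := by
    rw [hfib]
    exact (Finset.sum_subset (Finset.subset_univ T) (fun a _ ha => hzero a ha)).symm
  have hfib0 : (univ.filter (fun x : F => x ^ 2 = (0:F))).card = 1 := by
    rw [Finset.card_eq_one]
    refine ⟨0, ?_⟩
    ext x
    simp [pow_eq_zero_iff]
  have hfib2 : ∀ a : F, a ∈ T → a ≠ 0 → (univ.filter (fun x : F => x ^ 2 = a)).card = 2 := by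
    intro a haT ha0
    simp only [hT, mem_filter, mem_univ, true_and] at haT
    obtain ⟨b, hb⟩ := haT
    have hb2 : a = b ^ 2 := by rw [hb]; ring
    have hbne : b ≠ 0 := by rintro rfl; exact ha0 (by simp [hb2])
    have hfilt : univ.filter (fun x : F => x ^ 2 = a) = {b, -b} := by
      ext x
      simp only [mem_filter, mem_univ, true_and, Finset.mem_insert, Finset.mem_singleton, hb2]
      exact sq_eq_sq_iff_eq_or_eq_neg
    rw [hfilt]
    refine Finset.card_pair ?_
    intro h
    apply hbne
    have h2 : (2 : F) * b = 0 := by rw [two_mul]; nth_rewrite 1 [h]; ring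
    rcases mul_eq_zero.mp h2 with h3 | h3
    · exact absurd h3 (Ring.two_ne_zero hF)
    · exact h3
  have hmain : (univ : Finset F).card = 1 + 2 * (T.erase 0).card := by
    rw [hsum, ← Finset.add_sum_erase _ _ h0T, hfib0]
    congr 1
    have : ∑ a ∈ T.erase 0, (univ.filter (fun x : F => x ^ 2 = a)).card
        = ∑ _a ∈ T.erase 0, 2 :=
      Finset.sum_congr rfl fun a ha =>
        hfib2 a (Finset.mem_of_mem_erase ha) (Finset.ne_of_mem_erase ha)
    rw [this, Finset.sum_const, smul_eq_mul, Nat.mul_comm]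
  have hcard_erase : (T.erase 0).card = T.card - 1 := Finset.card_erase_of_mem h0T
  have hTpos : 1 ≤ T.card := Finset.card_pos.mpr ⟨0, h0T⟩
  rw [Finset.card_univ] at hmain
  omega

end SquareCount

section Pivot

variable {F : Type*} [Field F] {n : ℕ}

lemma pivot_unique {v : Fin n → F} {k l : Fin n} (hk1 : v k = 1)
    (hk0 : ∀ j, j < k → v j = 0) (hl1 : v l = 1) (hl0 : ∀ j, j < l → v j = 0) : k = l := by
  rcases lt_trichotomy k l with h | h | h
  · have := hl0 k h; rw [hk1] at this; exact absurd this one_ne_zero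
  · exact h
  · have := hk0 l h; rw [hl1] at this; exact absurd this one_ne_zero

end Pivot

/-- `vecOf k f` is the vector with pivot `1` at `k`, zeros before, and `f` after. -/
noncomputable def vecOf {F : Type*} [Field F] {n : ℕ} (k : Fin n)
    (f : {j : Fin n // k < j} → F) : Fin n → F :=
  fun j => if h : k < j then f ⟨j, h⟩ else if j = k then 1 else 0

theorem stmt_7_equiv1 (F : Type*) [Field F] (n : ℕ) :
    Nonempty ({v : Fin n → F // (∀ i, IsSquare (v i)) ∧ ∃ k : Fin n, v k = 1 ∧ ∀ j, j < k → v j = 0}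
      ≃ {V : Submodule F (Fin n → F) //
        Module.finrank F V = 1 ∧
        ∃ v : Fin n → F, V = Submodule.span F {v} ∧ ∀ i, ∃ x : F, x ^ 2 = v i}) := by
  classical
  refine ⟨Equiv.ofBijective (fun a => ⟨Submodule.span F {a.1}, ?_, a.1, rfl, ?_⟩) ⟨?_, ?_⟩⟩
  · obtain ⟨hsq, k, hk1, hk0⟩ := a.2
    exact finrank_span_singleton (fun h => one_ne_zero (hk1 ▸ congrFun h k))
  · intro i
    obtain ⟨x, hx⟩ := a.2.1 i
    exact ⟨x, by rw [hx]; ring⟩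
  · -- injectivity
    rintro ⟨v, hvsq, kv, hv1, hv0⟩ ⟨w, hwsq, kw, hw1, hw0⟩ h
    have hspan : Submodule.span F {v} = Submodule.span F {w} := congrArg Subtype.val h
    have hv_mem : v ∈ Submodule.span F {w} := hspan ▸ Submodule.mem_span_singleton_self v
    obtain ⟨c, hc⟩ := Submodule.mem_span_singleton.mp hv_mem
    have hcv : ∀ j, v j = c * w j := fun j => by rw [← hc]; rfl
    have hcne : c ≠ 0 := by
      intro h0
      have := hcv kv
      rw [hv1, h0, zero_mul] at this
      exact one_ne_zero this
    have hk : kv = kw := by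
      rcases lt_trichotomy kv kw with hlt | heq | hgt
      · have := hcv kv
        rw [hv1, hw0 kv hlt, mul_zero] at this
        exact absurd this one_ne_zero
      · exact heq
      · have := hcv kw
        rw [hv0 kw hgt, hw1, mul_one] at this
        exact absurd this.symm hcne
    have hc1 : c = 1 := by
      have := hcv kv
      rw [hv1, hk, hw1, mul_one] at this
      exact this.symm
    have : v = w := funext fun j => by rw [hcv j, hc1, one_mul]
    subst this
    exact Subtype.ext rfl
  · -- surjectivity
    rintro ⟨V, hrk, v, hVv, hsq⟩
    have hvne : v ≠ 0 := by
      rintro rfl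
      rw [Set.singleton_zero, Submodule.span_zero] at hVv
      rw [hVv, finrank_bot] at hrk
      exact one_ne_zero hrk.symm
    have hne : (univ.filter (fun i : Fin n => v i ≠ 0)).Nonempty := by
      obtain ⟨i, hi⟩ := Function.ne_iff.mp hvne
      exact ⟨i, by simpa using hi⟩
    set k := (univ.filter (fun i : Fin n => v i ≠ 0)).min' hne with hkdef
    have hvk : v k ≠ 0 := by
      have := Finset.min'_mem _ hne
      simpa [hkdef] using this
    have hvlt : ∀ j, j < k → v j = 0 := by
      intro j hj
      by_contra hzero
      have : k ≤ j := Finset.min'_le _ j (by simpa using hzero)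
      exact absurd hj (not_lt.mpr this)
    refine ⟨⟨(v k)⁻¹ • v, ?_, k, ?_, ?_⟩, ?_⟩
    · intro i
      have h1 : IsSquare (v i) := by
        obtain ⟨x, hx⟩ := hsq i
        exact ⟨x, by rw [← hx]; ring⟩
      have h2 : IsSquare ((v k)⁻¹) := by
        obtain ⟨x, hx⟩ := hsq k
        exact (IsSquare.inv ⟨x, by rw [← hx]; ring⟩)
      simpa using h2.mul h1
    · simp [inv_mul_cancel₀ hvk]
    · intro j hj
      simp [hvlt j hj]
    · refine Subtype.ext ?_
      show Submodule.span F {(v k)⁻¹ • v} = V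
      rw [Submodule.span_singleton_smul_eq (isUnit_iff_ne_zero.mpr (inv_ne_zero hvk)) v, hVv]

theorem stmt_7_equiv2 (F : Type*) [Field F] (n : ℕ) :
    Nonempty ((Σ k : Fin n, ({j : Fin n // k < j} → {x : F // IsSquare x}))
      ≃ {v : Fin n → F // (∀ i, IsSquare (v i)) ∧
          ∃ k : Fin n, v k = 1 ∧ ∀ j, j < k → v j = 0}) := by
  classical
  refine ⟨Equiv.ofBijective (fun a => ⟨vecOf a.1 (fun j => (a.2 j : F)), ?_, a.1, ?_, ?_⟩)
    ⟨?_, ?_⟩⟩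
  · intro i
    unfold vecOf
    split
    · exact (a.2 _).2
    · split
      · exact ⟨1, (mul_one 1).symm⟩
      · exact ⟨0, (mul_zero 0).symm⟩
  · simp [vecOf]
  · intro j hj
    have h1 : ¬ a.1 < j := asymm hj
    have h2 : j ≠ a.1 := ne_of_lt hj
    simp [vecOf, h1, h2]
  · -- injectivity
    rintro ⟨k, f⟩ ⟨l, g⟩ h
    have hv : vecOf k (fun j => (f j : F)) = vecOf l (fun j => (g j : F)) :=
      congrArg Subtype.val h
    have hpiv : ∀ (k : Fin n) (f : {j : Fin n // k < j} → F),
        vecOf k f k = 1 ∧ ∀ j, j < k → vecOf k f j = 0 := by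
      intro k f
      constructor
      · simp [vecOf]
      · intro j hj
        simp [vecOf, asymm hj, ne_of_lt hj]
    have hkl : k = l := by
      obtain ⟨h1, h2⟩ := hpiv k (fun j => (f j : F))
      obtain ⟨h3, h4⟩ := hpiv l (fun j => (g j : F))
      exact pivot_unique (hv ▸ h1) (fun j hj => hv ▸ h2 j hj) h3 h4
    subst hkl
    have : f = g := by
      funext j
      have := congrFun hv j.1
      refine Subtype.ext ?_
      simpa [vecOf, j.2] using this
    rw [this]
  · -- surjectivity
    rintro ⟨v, hsq, k, hk1, hk0⟩
    refine ⟨⟨k, fun j => ⟨v j.1, hsq j.1⟩⟩, Subtype.ext ?_⟩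
    show vecOf k (fun j => v j.1) = v
    funext j
    unfold vecOf
    split
    · rfl
    · rename_i hnlt
      split
      · rename_i hjk; rw [hjk, hk1]
      · rename_i hjk
        exact (hk0 j (lt_of_le_of_ne (not_lt.mp hnlt) hjk)).symm

/-- The number of totally nonnegative lines in `F_q^n` (lines spanned by a vector all
of whose entries are squares) is `∑_{i=0}^{n-1} ((q+1)/2)^i`. -/
theorem stmt_7 (F : Type*) [Field F] [Fintype F] (p r : ℕ) (hp : p.Prime) (hodd : Odd p)
    (hr : 0 < r) (hcard : Fintype.card F = p ^ r) (n : ℕ) (hn : 1 ≤ n) :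
    Nat.card {V : Submodule F (Fin n → F) //
        Module.finrank F V = 1 ∧
        ∃ v : Fin n → F, V = Submodule.span F {v} ∧ ∀ i, ∃ x : F, x ^ 2 = v i} =
      ∑ i ∈ Finset.range n, ((Fintype.card F + 1) / 2) ^ i := by
  classical
  have hoddcard : Odd (Fintype.card F) := hcard ▸ hodd.pow
  have hchar : ringChar F ≠ 2 := by
    intro h
    have h2 := FiniteField.even_card_iff_char_two.mp h
    rw [Nat.odd_iff] at hoddcard
    omega
  obtain ⟨e1⟩ := stmt_7_equiv1 F n
  obtain ⟨e2⟩ := stmt_7_equiv2 F n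
  rw [← Nat.card_congr (e2.trans e1), Nat.card_eq_fintype_card, Fintype.card_sigma]
  have hSq : Fintype.card {x : F // IsSquare x} = (Fintype.card F + 1) / 2 := by
    have := two_mul_card_isSquare F hchar
    rw [Fintype.card_subtype]
    omega
  have hIoi : ∀ k : Fin n, Fintype.card {j : Fin n // k < j} = n - 1 - (k : ℕ) := by
    intro k
    rw [Fintype.card_subtype]
    have h : univ.filter (fun j : Fin n => k < j) = Finset.Ioi k := by
      ext j; simp
    rw [h, Fin.card_Ioi]
  calc ∑ k : Fin n, Fintype.card ({j : Fin n // k < j} → {x : F // IsSquare x})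
      = ∑ k : Fin n, ((Fintype.card F + 1) / 2) ^ (n - 1 - (k : ℕ)) := by
        refine Finset.sum_congr rfl fun k _ => ?_
        rw [Fintype.card_fun, hSq, hIoi]
    _ = ∑ i ∈ Finset.range n, ((Fintype.card F + 1) / 2) ^ (n - 1 - i) :=
        Fin.sum_univ_eq_sum_range (fun i => ((Fintype.card F + 1) / 2) ^ (n - 1 - i)) n
    _ = ∑ i ∈ Finset.range n, ((Fintype.card F + 1) / 2) ^ i :=
        Finset.sum_range_reflect (fun i => ((Fintype.card F + 1) / 2) ^ i) n
end

section
/- For every n ≥ 0, the coefficient of x^n in the Chebyshev polynomial of the first kind T_{n+6}(x) equals −2^{n−2}(n+1)(n+2)(n+6)/3. -/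
open Polynomial Polynomial.Chebyshev

private lemma two_eq_C : (2 : ℚ[X]) = C 2 := by rw [map_ofNat]

private lemma coeff_step (p q : ℚ[X]) (m : ℕ) :
    (2 * X * p - q).coeff (m + 1) = 2 * p.coeff m - q.coeff (m + 1) := by
  rw [mul_assoc, two_eq_C, coeff_sub, coeff_C_mul, coeff_X_mul]

private lemma coeff_step0 (p q : ℚ[X]) :
    (2 * X * p - q).coeff 0 = -q.coeff 0 := by
  rw [mul_assoc, two_eq_C, coeff_sub, coeff_C_mul, Polynomial.mul_coeff_zero,
    coeff_X_zero]
  ring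

private lemma T_coeff_zero_step (k : ℤ) :
    (T ℚ (k + 2)).coeff 0 = -(T ℚ k).coeff 0 := by
  rw [T_add_two, coeff_step0]

private lemma coeff_T_zero : ∀ n m : ℕ, n < m → (T ℚ n).coeff m = 0
  | 0, m, h => by
    rw [show ((0 : ℕ) : ℤ) = 0 by norm_num, T_zero, coeff_one]
    simp only [ite_eq_right_iff]; omega
  | 1, m, h => by
    rw [show ((1 : ℕ) : ℤ) = 1 by norm_num, T_one, coeff_X]
    simp only [ite_eq_right_iff]; omega
  | (n + 2), m, h => by
    obtain ⟨m', rfl⟩ : ∃ m', m = m' + 1 := ⟨m - 1, by omega⟩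
    rw [show ((n + 2 : ℕ) : ℤ) = (n : ℤ) + 2 by push_cast; ring, T_add_two,
      coeff_step]
    rw [show ((n : ℤ) + 1) = ((n + 1 : ℕ) : ℤ) by push_cast; ring]
    rw [coeff_T_zero (n + 1) m' (by omega), coeff_T_zero n (m' + 1) (by omega)]
    ring

private lemma lemA : ∀ n : ℕ, (T ℚ ((n : ℤ) + 1)).coeff (n + 1) = 2 ^ n
  | 0 => by norm_num [T_one]
  | (n + 1) => by
    rw [show ((n + 1 : ℕ) : ℤ) + 1 = (n : ℤ) + 2 by push_cast; ring, T_add_two,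
      coeff_step, lemA n, coeff_T_zero n (n + 2) (by omega)]
    ring

private lemma lemB : ∀ n : ℕ, (T ℚ ((n : ℤ) + 2)).coeff n = -((n + 2) * 2 ^ n / 2)
  | 0 => by
    rw [show ((0 : ℕ) : ℤ) + 2 = 0 + 2 by norm_num, T_coeff_zero_step, T_zero]
    norm_num
  | (n + 1) => by
    rw [show ((n + 1 : ℕ) : ℤ) + 2 = ((n : ℤ) + 1) + 2 by push_cast; ring, T_add_two,
      coeff_step, show ((n : ℤ) + 1) + 1 = (n : ℤ) + 2 by ring, lemB n, lemA n]
    push_cast; ring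

private lemma lemC : ∀ n : ℕ, (T ℚ ((n : ℤ) + 4)).coeff n = (n + 4) * (n + 1) * 2 ^ n / 4
  | 0 => by
    rw [show ((0 : ℕ) : ℤ) + 4 = 2 + 2 by norm_num, T_coeff_zero_step,
      show (2 : ℤ) = 0 + 2 by norm_num, T_coeff_zero_step, T_zero]
    norm_num
  | (n + 1) => by
    rw [show ((n + 1 : ℕ) : ℤ) + 4 = ((n : ℤ) + 3) + 2 by push_cast; ring, T_add_two,
      coeff_step, show ((n : ℤ) + 3) + 1 = (n : ℤ) + 4 by ring, lemC n,
      show ((n : ℤ) + 3) = ((n + 1 : ℕ) : ℤ) + 2 by push_cast; ring, lemB (n + 1)]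
    push_cast; ring

private lemma lemD : ∀ n : ℕ,
    (T ℚ ((n : ℤ) + 6)).coeff n = -((n + 1) * (n + 2) * (n + 6) * 2 ^ n / 12)
  | 0 => by
    rw [show ((0 : ℕ) : ℤ) + 6 = 4 + 2 by norm_num, T_coeff_zero_step,
      show (4 : ℤ) = 2 + 2 by norm_num, T_coeff_zero_step,
      show (2 : ℤ) = 0 + 2 by norm_num, T_coeff_zero_step, T_zero]
    norm_num
  | (n + 1) => by
    rw [show ((n + 1 : ℕ) : ℤ) + 6 = ((n : ℤ) + 5) + 2 by push_cast; ring, T_add_two,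
      coeff_step, show ((n : ℤ) + 5) + 1 = (n : ℤ) + 6 by ring, lemD n,
      show ((n : ℤ) + 5) = ((n + 1 : ℕ) : ℤ) + 4 by push_cast; ring, lemC (n + 1)]
    push_cast; ring

/-- The coefficient of `x^n` in the Chebyshev polynomial `T_{n+6}` equals
`-2^(n-2)(n+1)(n+2)(n+6)/3`. -/
theorem stmt_10 (n : ℕ) :
    (Polynomial.Chebyshev.T ℚ ((n : ℤ) + 6)).coeff n =
      -((2 : ℚ) ^ ((n : ℤ) - 2) * (n + 1) * (n + 2) * (n + 6) / 3) := by
  rw [lemD n,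
    show ((n : ℤ) - 2) = (n : ℤ) + (-2) by ring,
    zpow_add₀ (by norm_num : (2 : ℚ) ≠ 0), zpow_natCast]
  norm_num
  ring
end

section
/- For every n ≥ 2, the sum over 1 ≤ i < j ≤ n of 3^{j−i−1}·5^{n−j}, plus the sum over 1 ≤ i < j < ℓ ≤ n of 4·3^{j−i−1}·5^{ℓ−j−1}·7^{n−ℓ}, equals (2·7^n − 3·5^n + 1)/24. -/
open Finset

private lemma lemA_s14 (n : ℕ) : ∑ i ∈ Icc 1 n, (3:ℚ)^(n-i) = (3^n - 1)/2 := by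
  induction n with
  | zero => simp
  | succ n ih =>
    rw [Finset.sum_Icc_succ_top (by omega)]
    have h : ∑ i ∈ Icc 1 n, (3:ℚ)^(n+1-i) = 3 * ∑ i ∈ Icc 1 n, (3:ℚ)^(n-i) := by
      rw [Finset.mul_sum]
      refine Finset.sum_congr rfl fun i hi => ?_
      simp only [mem_Icc] at hi
      rw [show n+1-i = (n-i)+1 by omega, pow_succ]
      ring
    rw [h, ih]
    simp only [Nat.sub_self, pow_zero, pow_succ]
    ring

private lemma lemB_s14 (n : ℕ) :
    ∑ i ∈ Icc 1 n, ∑ j ∈ Ioc i n, (3:ℚ)^(j-i-1) * 5^(n-j)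
      = (5^n - 2*3^n + 1)/8 := by
  induction n with
  | zero => norm_num
  | succ n ih =>
    rw [Finset.sum_Icc_succ_top (by omega)]
    have h : ∀ i ∈ Icc 1 n,
        ∑ j ∈ Ioc i (n+1), (3:ℚ)^(j-i-1) * 5^(n+1-j)
          = (3:ℚ)^(n-i) + 5 * ∑ j ∈ Ioc i n, (3:ℚ)^(j-i-1) * 5^(n-j) := by
      intro i hi
      simp only [mem_Icc] at hi
      rw [Finset.sum_Ioc_succ_top (by omega), Finset.mul_sum]
      rw [show n+1-i-1 = n-i by omega, Nat.sub_self, pow_zero, mul_one]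
      rw [add_comm]
      congr 1
      refine Finset.sum_congr rfl fun j hj => ?_
      simp only [mem_Ioc] at hj
      rw [show n+1-j = (n-j)+1 by omega, pow_succ]
      ring
    rw [Finset.sum_congr rfl h, Finset.sum_add_distrib, lemA_s14, ← Finset.mul_sum, ih]
    simp only [Ioc_self, Finset.sum_empty, pow_succ]
    ring

private lemma lemC_s14 (n : ℕ) :
    ∑ i ∈ Icc 1 n, ∑ j ∈ Ioc i n, ∑ l ∈ Ioc j n,
        4 * (3:ℚ)^(j-i-1) * 5^(l-j-1) * 7^(n-l)
      = (7^n - 3*5^n + 3*3^n - 1)/12 := by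
  induction n with
  | zero => simp
  | succ n ih =>
    rw [Finset.sum_Icc_succ_top (by omega)]
    have h : ∀ i ∈ Icc 1 n,
        ∑ j ∈ Ioc i (n+1), ∑ l ∈ Ioc j (n+1),
            4 * (3:ℚ)^(j-i-1) * 5^(l-j-1) * 7^(n+1-l)
          = (∑ j ∈ Ioc i n, 4 * (3:ℚ)^(j-i-1) * 5^(n-j))
            + 7 * ∑ j ∈ Ioc i n, ∑ l ∈ Ioc j n,
                4 * (3:ℚ)^(j-i-1) * 5^(l-j-1) * 7^(n-l) := by
      intro i hi
      simp only [mem_Icc] at hi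
      rw [Finset.sum_Ioc_succ_top (by omega)]
      simp only [Ioc_self, Finset.sum_empty, add_zero]
      rw [Finset.mul_sum, ← Finset.sum_add_distrib]
      refine Finset.sum_congr rfl fun j hj => ?_
      simp only [mem_Ioc] at hj
      rw [Finset.sum_Ioc_succ_top (by omega)]
      rw [show n+1-j-1 = n-j by omega, Nat.sub_self, pow_zero, mul_one]
      have hl : ∑ l ∈ Ioc j n, 4 * (3:ℚ)^(j-i-1) * 5^(l-j-1) * 7^(n+1-l)
          = 7 * ∑ l ∈ Ioc j n, 4 * (3:ℚ)^(j-i-1) * 5^(l-j-1) * 7^(n-l) := by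
        rw [Finset.mul_sum]
        refine Finset.sum_congr rfl fun l hl => ?_
        simp only [mem_Ioc] at hl
        rw [show n+1-l = (n-l)+1 by omega, pow_succ]
        ring
      rw [hl]
      ring
    rw [Finset.sum_congr rfl h, Finset.sum_add_distrib, ← Finset.mul_sum, ih]
    have h4 : ∑ i ∈ Icc 1 n, ∑ j ∈ Ioc i n, 4 * (3:ℚ)^(j-i-1) * 5^(n-j)
        = 4 * ((5^n - 2*3^n + 1)/8) := by
      rw [← lemB_s14 n, Finset.mul_sum]
      refine Finset.sum_congr rfl fun i _ => ?_
      rw [Finset.mul_sum]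
      refine Finset.sum_congr rfl fun j _ => ?_
      ring
    rw [h4]
    simp only [Ioc_self, Finset.sum_empty, pow_succ]
    ring

/-- Summation identity for the point count of `Gr_{2,n}^{≥0}(F_5)`. -/
theorem stmt_14 (n : ℕ) (hn : 2 ≤ n) :
    (∑ i ∈ Finset.Icc 1 n, ∑ j ∈ Finset.Ioc i n,
        (3 : ℚ) ^ (j - i - 1) * 5 ^ (n - j)) +
    (∑ i ∈ Finset.Icc 1 n, ∑ j ∈ Finset.Ioc i n, ∑ l ∈ Finset.Ioc j n,
        4 * (3 : ℚ) ^ (j - i - 1) * 5 ^ (l - j - 1) * 7 ^ (n - l)) =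
      (2 * 7 ^ n - 3 * 5 ^ n + 1) / 24 := by
  rw [lemB_s14, lemC_s14]
  ring
end
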